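/- Let p be a prime, let δ be a positive integer with p ∤ δ, and let φ ∈ M₂(ℚ) with det φ ≠ 0 be such that Φ/det φ ∈ M₃(ℤ_p), where Φ = [[d², 2cd, c²/δ], [bd, bc+ad, ac/δ], [b²δ, 2abδ, a²]] for φ = [[a,b],[c,d]] and ℤ_p is the localisation of ℤ at p. Then, after multiplying φ by a suitable power of p, φ lies in the unit group of the order Λ_p = [[ℤ_p, ℤ_p],[δℤ_p, ℤ_p]]. -/

import Mathlib

/-- Membership in `ℤ_p ⊂ ℚ`, the localisation of `ℤ` at the prime ideal `(p)`:
rationals expressible with denominator prime to `p`. -/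
def inZp (p : ℕ) (x : ℚ) : Prop := ∃ a b : ℤ, ¬ (p : ℤ) ∣ b ∧ x = (a : ℚ) / (b : ℚ)

/-- Membership in the order `Λ_p = [[ℤ_p, ℤ_p], [δℤ_p, ℤ_p]] ⊂ M₂(ℚ)`. -/
def inLambda (p δ : ℕ) (M : Matrix (Fin 2) (Fin 2) ℚ) : Prop :=
  inZp p (M 0 0) ∧ inZp p (M 0 1) ∧ (∃ y : ℚ, inZp p y ∧ M 1 0 = (δ : ℚ) * y) ∧ inZp p (M 1 1)

/-- Membership in the unit group `Λ_p^×`. -/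
def inLambdaUnits (p δ : ℕ) (M : Matrix (Fin 2) (Fin 2) ℚ) : Prop :=
  inLambda p δ M ∧ ∃ N : Matrix (Fin 2) (Fin 2) ℚ, inLambda p δ N ∧ M * N = 1 ∧ N * M = 1

lemma inZp_iff (p : ℕ) [hpf : Fact p.Prime] (x : ℚ) : inZp p x ↔ padicNorm p x ≤ 1 := by
  have hp := hpf.out
  constructor
  · rintro ⟨a, b, hb, rfl⟩
    rw [padicNorm.div, (padicNorm.int_eq_one_iff b).2 hb, div_one]
    exact padicNorm.of_int a
  · intro h
    rcases eq_or_ne x 0 with rfl | hx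
    · refine ⟨0, 1, ?_, by simp⟩
      intro h
      have h1 : (p:ℤ) = 1 := Int.eq_one_of_dvd_one (by positivity) h
      exact hp.one_lt.ne' (by exact_mod_cast h1)
    · refine ⟨x.num, x.den, ?_, (Rat.num_div_den x).symm⟩
      intro hd
      have hdn : p ∣ x.den := Int.ofNat_dvd.mp hd
      have hnum : ¬ (p : ℤ) ∣ x.num := by
        intro hn
        have h1 : p ∣ Nat.gcd x.num.natAbs x.den :=
          Nat.dvd_gcd (Int.natAbs_dvd_natAbs.mpr hn) hdn
        rw [x.reduced] at h1
        exact hp.one_lt.ne' (Nat.eq_one_of_dvd_one h1)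
      have hnorm : padicNorm p x = padicNorm p (x.num : ℚ) / padicNorm p (x.den : ℚ) := by
        conv_lhs => rw [← Rat.num_div_den x]
        exact padicNorm.div _ _
      rw [(padicNorm.int_eq_one_iff x.num).2 hnum] at hnorm
      have hden1 : padicNorm p (x.den : ℚ) < 1 := (padicNorm.nat_lt_one_iff x.den).2 hdn
      have hdpos : 0 < padicNorm p (x.den : ℚ) :=
        lt_of_le_of_ne (padicNorm.nonneg _)
          (Ne.symm (padicNorm.nonzero (by exact_mod_cast x.den_nz)))
      rw [hnorm] at h
      have : (1:ℚ) < 1 / padicNorm p (x.den : ℚ) := (one_lt_div hdpos).2 hden1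
      linarith

lemma smul_fin2 (r a b c d : ℚ) : r • !![a,b;c,d] = !![r*a,r*b;r*c,r*d] := by
  ext i j; fin_cases i <;> fin_cases j <;> simp

lemma key_lambda (p : ℕ) [hpf : Fact p.Prime] (δ : ℕ) (hpδ : ¬ p ∣ δ) (hδ : 0 < δ)
    (A B C D : ℚ) (hA : padicNorm p A ≤ 1) (hB : padicNorm p B ≤ 1)
    (hC : padicNorm p C ≤ 1) (hD : padicNorm p D ≤ 1)
    (hE : padicNorm p (A*D - B*C) = 1) :
    inLambdaUnits p δ !![A,B;C,D] := by
  have hδ0 : (δ : ℚ) ≠ 0 := Nat.cast_ne_zero.2 hδ.ne'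
  have hNδ : padicNorm p (δ : ℚ) = 1 := (padicNorm.nat_eq_one_iff δ).2 hpδ
  set E := A*D - B*C with hEdef
  have hE0 : E ≠ 0 := fun h => by simp [h, padicNorm.zero] at hE
  have hdivle : ∀ x : ℚ, padicNorm p x ≤ 1 → padicNorm p (x / E) ≤ 1 := by
    intro x hx
    rw [padicNorm.div, hE, div_one]; exact hx
  have hdivδ : ∀ x : ℚ, padicNorm p x ≤ 1 → inZp p (x / δ) := by
    intro x hx
    rw [inZp_iff, padicNorm.div, hNδ, div_one]; exact hx
  constructor
  · refine ⟨?_, ?_, ⟨C / δ, hdivδ C hC, ?_⟩, ?_⟩ <;>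
      simp [inZp_iff, hA, hB, hD, mul_div_cancel₀, hδ0]
  · refine ⟨!![D/E, -B/E; -C/E, A/E], ⟨?_, ?_, ⟨-C/(δ*E), ?_, ?_⟩, ?_⟩, ?_, ?_⟩
    · simpa [inZp_iff] using hdivle D hD
    · simp only [inZp_iff]
      simpa [padicNorm.neg, neg_div] using hdivle B hB
    · rw [inZp_iff, padicNorm.div, padicNorm.neg, padicNorm.mul, hNδ, hE, one_mul, div_one]
      exact hC
    · show -C/E = (δ:ℚ) * (-C/((δ:ℚ)*E))
      field_simp
    · simpa [inZp_iff] using hdivle A hA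
    · rw [Matrix.mul_fin_two, Matrix.one_fin_two]
      ext i j; fin_cases i <;> fin_cases j <;> simp <;> field_simp <;> linarith [hEdef]
    · rw [Matrix.mul_fin_two, Matrix.one_fin_two]
      ext i j; fin_cases i <;> fin_cases j <;> simp <;> field_simp <;> linarith [hEdef]

lemma padicNorm_inv' (p : ℕ) [Fact p.Prime] (x : ℚ) :
    padicNorm p x⁻¹ = (padicNorm p x)⁻¹ := by
  rcases eq_or_ne x 0 with rfl | hx
  · simp [padicNorm.zero]
  · have h : padicNorm p x * padicNorm p x⁻¹ = 1 := by
      rw [← padicNorm.mul, mul_inv_cancel₀ hx, padicNorm.one]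
    exact (eq_inv_of_mul_eq_one_right h)

lemma padicNorm_ppow (p : ℕ) [hpf : Fact p.Prime] (n : ℕ) :
    padicNorm p ((p:ℚ)^n) = (p:ℚ)^(-(n:ℤ)) := by
  induction n with
  | zero => simp [padicNorm.one]
  | succ n ih =>
    rw [pow_succ, padicNorm.mul, ih, padicNorm.padicNorm_p_of_prime]
    have hp0 : (p:ℚ) ≠ 0 := Nat.cast_ne_zero.2 hpf.out.pos.ne'
    rw [← zpow_neg_one, ← zpow_add₀ hp0]
    push_cast
    ring_nf

lemma padicNorm_zpow (p : ℕ) [hpf : Fact p.Prime] (m : ℤ) :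
    padicNorm p ((p:ℚ)^m) = (p:ℚ)^(-m) := by
  cases m with
  | ofNat n => simpa using padicNorm_ppow p n
  | negSucc n =>
    rw [zpow_negSucc, padicNorm_inv', padicNorm_ppow, ← zpow_neg, neg_neg, Int.neg_negSucc]

lemma main_aux (p : ℕ) [hpf : Fact p.Prime] (δ : ℕ) (hpδ : ¬ p ∣ δ) (hδ : 0 < δ)
    (a b c d : ℚ) (x : ℚ) (hx : x ≠ 0)
    (hND : padicNorm p (a*d - b*c) = padicNorm p x ^ 2)
    (ha : padicNorm p a ≤ padicNorm p x) (hb : padicNorm p b ≤ padicNorm p x)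
    (hc : padicNorm p c ≤ padicNorm p x) (hd : padicNorm p d ≤ padicNorm p x) :
    ∃ k : ℤ, inLambdaUnits p δ (((p : ℚ) ^ k) • !![a, b; c, d]) := by
  have hp0 : (p:ℚ) ≠ 0 := Nat.cast_ne_zero.2 hpf.out.pos.ne'
  refine ⟨-padicValRat p x, ?_⟩
  rw [smul_fin2]
  set m := -padicValRat p x with hm
  have hNx : padicNorm p x = (p:ℚ)^m := padicNorm.eq_zpow_of_nonzero hx
  have hNpm : padicNorm p ((p:ℚ)^m) = ((p:ℚ)^m)⁻¹ := by
    rw [padicNorm_zpow, zpow_neg]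
  have hppos : (0:ℚ) < (p:ℚ)^m :=
    zpow_pos (by exact_mod_cast hpf.out.pos) _
  have hle : ∀ y : ℚ, padicNorm p y ≤ padicNorm p x → padicNorm p ((p:ℚ)^m * y) ≤ 1 := by
    intro y hy
    rw [padicNorm.mul, hNpm]
    rw [hNx] at hy
    rw [inv_mul_le_iff₀ hppos, mul_one]
    exact hy
  apply key_lambda p δ hpδ hδ _ _ _ _ (hle a ha) (hle b hb) (hle c hc) (hle d hd)
  have hfact : ((p:ℚ)^m * a) * ((p:ℚ)^m * d) - ((p:ℚ)^m * b) * ((p:ℚ)^m * c)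
      = ((p:ℚ)^m * (p:ℚ)^m) * (a*d - b*c) := by ring
  rw [hfact, padicNorm.mul, padicNorm.mul, hNpm, hND, hNx]
  field_simp

set_option maxHeartbeats 1000000 in
theorem stmt_13 (p : ℕ) (hp : p.Prime) (δ : ℕ) (hδ : 0 < δ) (hpδ : ¬ p ∣ δ)
    (a b c d : ℚ) (hdet : a * d - b * c ≠ 0)
    (hΦ : ∀ i j : Fin 3,
      inZp p (((a * d - b * c)⁻¹ •
        (!![d ^ 2, 2 * c * d, c ^ 2 / (δ : ℚ);
            b * d, b * c + a * d, a * c / (δ : ℚ);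
            b ^ 2 * (δ : ℚ), 2 * a * b * (δ : ℚ), a ^ 2] :
          Matrix (Fin 3) (Fin 3) ℚ)) i j)) :
    ∃ k : ℤ, inLambdaUnits p δ (((p : ℚ) ^ k) • !![a, b; c, d]) := by
  haveI : Fact p.Prime := ⟨hp⟩
  have hδ0 : (δ : ℚ) ≠ 0 := Nat.cast_ne_zero.2 hδ.ne'
  have hNδ : padicNorm p (δ : ℚ) = 1 := (padicNorm.nat_eq_one_iff δ).2 hpδ
  set D := a * d - b * c with hDdef
  have hNDpos : 0 < padicNorm p D :=
    lt_of_le_of_ne (padicNorm.nonneg _) (Ne.symm (padicNorm.nonzero hdet))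
  have hstep : ∀ e : ℚ, inZp p (D⁻¹ * e) → padicNorm p e ≤ padicNorm p D := by
    intro e he
    rw [inZp_iff, padicNorm.mul, padicNorm_inv', inv_mul_le_iff₀ hNDpos, mul_one] at he
    exact he
  have h00 : padicNorm p (d^2) ≤ padicNorm p D := hstep (d^2) (by simpa using hΦ 0 0)
  have h22 : padicNorm p (a^2) ≤ padicNorm p D := hstep (a^2) (by simpa using hΦ 2 2)
  have h02 : padicNorm p (c^2 / δ) ≤ padicNorm p D := hstep _ (by simpa using hΦ 0 2)
  have h20 : padicNorm p (b^2 * δ) ≤ padicNorm p D := hstep _ (by simpa using hΦ 2 0)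
  rw [sq, padicNorm.mul] at h00 h22
  rw [padicNorm.div, hNδ, div_one, sq, padicNorm.mul] at h02
  rw [padicNorm.mul, hNδ, mul_one, sq, padicNorm.mul] at h20
  set Na := padicNorm p a with hNa
  set Nb := padicNorm p b with hNb
  set Nc := padicNorm p c
  set Nd := padicNorm p d
  have hNa0 : 0 ≤ Na := padicNorm.nonneg _
  have hNb0 : 0 ≤ Nb := padicNorm.nonneg _
  have hNc0 : 0 ≤ Nc := padicNorm.nonneg _
  have hNd0 : 0 ≤ Nd := padicNorm.nonneg _
  have hmax : padicNorm p D ≤ max (Na * Nd) (Nb * Nc) := by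
    calc padicNorm p D ≤ max (padicNorm p (a*d)) (padicNorm p (b*c)) := padicNorm.sub
      _ = max (Na * Nd) (Nb * Nc) := by rw [padicNorm.mul, padicNorm.mul]
  have had : Na * Nd ≤ padicNorm p D := by nlinarith [sq_nonneg (Na - Nd)]
  have hbc : Nb * Nc ≤ padicNorm p D := by nlinarith [sq_nonneg (Nb - Nc)]
  have hDeq : padicNorm p D = max (Na * Nd) (Nb * Nc) :=
    le_antisymm hmax (max_le had hbc)
  rcases le_total (Nb * Nc) (Na * Nd) with hcase | hcase
  · -- D = Na * Nd, Na = Nd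
    have hD1 : padicNorm p D = Na * Nd := by rw [hDeq, max_eq_left hcase]
    have hNapos : 0 < Na := by nlinarith
    have hNdpos : 0 < Nd := by nlinarith
    have heq : Na = Nd := by
      have h1 : Na ≤ Nd := by nlinarith
      have h2 : Nd ≤ Na := by nlinarith
      linarith
    have ha0 : a ≠ 0 := by
      intro h
      rw [hNa, h, padicNorm.zero] at hNapos
      exact lt_irrefl _ hNapos
    apply main_aux p δ hpδ hδ a b c d a ha0
    · rw [hD1, ← heq, sq]
    · exact le_refl _
    · nlinarith
    · nlinarith
    · linarith
  · have hD1 : padicNorm p D = Nb * Nc := by rw [hDeq, max_eq_right hcase]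
    have hNbpos : 0 < Nb := by nlinarith
    have hNcpos : 0 < Nc := by nlinarith
    have heq : Nb = Nc := by
      have h1 : Nb ≤ Nc := by nlinarith
      have h2 : Nc ≤ Nb := by nlinarith
      linarith
    have hb0 : b ≠ 0 := by
      intro h
      rw [hNb, h, padicNorm.zero] at hNbpos
      exact lt_irrefl _ hNbpos
    apply main_aux p δ hpδ hδ a b c d b hb0
    · rw [hD1, ← heq, sq]
    · nlinarith
    · exact le_refl _
    · linarith
    · nlinarith
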